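/- arXiv:1011.3565 — 2 statements merged into one kernel-verified Lean document; each statement's English description precedes it below -/
import Mathlib

section
/- Let n ≥ 2 and for ξ > 0 define g_ξ : ℝ^n → ℝ by g_ξ(z) = (|z|^{n/(n-1)} + ξ^{n/(n-1)})^{1-n}. Then there exists a constant c(n) > 0 depending only on n such that for every M > 0 and ξ > 0: ∫_{B_M} g_ξ(z) dz ≥ c(n) · log(M^n/ξ^n + 1). -/
open MeasureTheory

private lemma one_dim_bound (n : ℕ) (hn : 2 ≤ n) (M ξ : ℝ) (hM : 0 < M) (hξ : 0 < ξ) :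
    ((2:ℝ)^(n-1))⁻¹ / n * Real.log (M ^ n / ξ ^ n + 1) ≤
      ∫ y in Set.Ioo (0:ℝ) M,
        y ^ (n-1) * ((y ^ ((n : ℝ) / (n - 1)) + ξ ^ ((n : ℝ) / (n - 1))) ^ (1 - (n : ℝ))) := by
  set p : ℝ := (n : ℝ) / (n - 1) with hp
  have hn1 : (1:ℝ) ≤ (n:ℝ) - 1 := by
    have : (2:ℝ) ≤ n := by exact_mod_cast hn
    linarith
  have hnne : ((n:ℝ) - 1) ≠ 0 := by linarith
  have hppos : 0 < p := div_pos (by positivity) (by linarith)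
  set κ : ℝ := ((2:ℝ)^(n-1))⁻¹ with hκ
  have hκpos : 0 < κ := by positivity
  set G : ℝ → ℝ := fun y => y ^ (n-1) * ((y ^ p + ξ ^ p) ^ (1 - (n : ℝ))) with hG
  -- 2 ^ (1 - n) = κ
  have h2 : (2:ℝ) ^ (1 - (n:ℝ)) = κ := by
    rw [show (1 - (n:ℝ)) = -(((n-1 : ℕ)):ℝ) by rw [Nat.cast_sub (by omega)]; push_cast; ring,
      Real.rpow_neg (by norm_num), Real.rpow_natCast]
  -- (x ^ p) ^ (1 - n) = (x ^ n)⁻¹ for x > 0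
  have hxp : ∀ x : ℝ, 0 < x → (x ^ p) ^ (1 - (n:ℝ)) = (x ^ n)⁻¹ := by
    intro x hx
    rw [← Real.rpow_natCast x n, ← Real.rpow_neg hx.le, ← Real.rpow_mul hx.le]
    congr 1
    field_simp [hp]
    have hpn : p * ((n:ℝ) - 1) = n := by rw [hp]; exact div_mul_cancel₀ _ hnne
    linear_combination -hpn
  -- continuity of G on [0, M]
  have hGc : ContinuousOn G (Set.Icc 0 M) := by
    apply ContinuousOn.mul ((continuous_pow _).continuousOn)
    apply ContinuousOn.rpow_const
    · exact (continuousOn_id.rpow_const (fun x _ => Or.inr hppos.le)).add continuousOn_const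
    · intro x hx
      left
      have : 0 < x ^ p + ξ ^ p := by
        have := Real.rpow_nonneg hx.1 p
        have := Real.rpow_pos_of_pos hξ p
        linarith
      exact ne_of_gt this
  -- pointwise lower bound on [0, a] with a ≤ ξ
  have hlow1 : ∀ a : ℝ, 0 < a → a ≤ ξ → ∀ y ∈ Set.Icc (0:ℝ) a,
      κ * (ξ ^ n)⁻¹ * y ^ (n-1) ≤ G y := by
    intro a ha haξ y hy
    have hyp : y ^ p ≤ ξ ^ p :=
      Real.rpow_le_rpow hy.1 (le_trans hy.2 haξ) hppos.le
    have hb : y ^ p + ξ ^ p ≤ 2 * ξ ^ p := by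
      have := Real.rpow_pos_of_pos hξ p
      linarith
    have hbpos : (0:ℝ) < 2 * ξ ^ p := by
      have := Real.rpow_pos_of_pos hξ p; linarith
    have h1 : (2 * ξ ^ p) ^ (1 - (n:ℝ)) ≤ (y ^ p + ξ ^ p) ^ (1 - (n:ℝ)) := by
      apply Real.rpow_le_rpow_of_nonpos _ hb (by linarith)
      have := Real.rpow_nonneg hy.1 p
      have := Real.rpow_pos_of_pos hξ p
      linarith
    have h2' : (2 * ξ ^ p) ^ (1 - (n:ℝ)) = κ * (ξ ^ n)⁻¹ := by
      rw [Real.mul_rpow (by norm_num) (Real.rpow_nonneg hξ.le p), h2, hxp ξ hξ]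
    calc κ * (ξ ^ n)⁻¹ * y ^ (n-1) = y ^ (n-1) * ((2 * ξ ^ p) ^ (1 - (n:ℝ))) := by
          rw [h2']; ring
      _ ≤ G y := by
          apply mul_le_mul_of_nonneg_left h1 (pow_nonneg hy.1 _)
  -- integral over [0,a] with a ≤ ξ
  have hint1 : ∀ a : ℝ, 0 < a → a ≤ M → a ≤ ξ →
      κ * (ξ ^ n)⁻¹ * (a ^ n / n) ≤ ∫ y in (0:ℝ)..a, G y := by
    intro a ha haM haξ
    have hGa : IntervalIntegrable G volume 0 a := by
      apply ContinuousOn.intervalIntegrable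
      apply hGc.mono
      rw [Set.uIcc_of_le ha.le]
      exact Set.Icc_subset_Icc le_rfl haM
    have hmono := intervalIntegral.integral_mono_on (μ := volume) ha.le
      (((continuous_const.mul (continuous_pow (n-1))).intervalIntegrable 0 a)) hGa
      (hlow1 a ha haξ)
    refine le_trans (le_of_eq ?_) hmono
    simp only [Pi.mul_apply]
    rw [intervalIntegral.integral_const_mul, integral_pow]
    rw [Nat.sub_add_cancel (by omega)]
    push_cast [Nat.cast_sub (show 1 ≤ n by omega)]
    rw [zero_pow (show n ≠ 0 by omega)]
    ring
  -- main split
  have key : κ / n * Real.log (M ^ n / ξ ^ n + 1) ≤ ∫ y in (0:ℝ)..M, G y := by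
    rcases le_or_gt M ξ with hMξ | hξM
    · -- small case
      refine le_trans ?_ (hint1 M hM le_rfl hMξ)
      have hlog : Real.log (M ^ n / ξ ^ n + 1) ≤ M ^ n / ξ ^ n := by
        have h0 : (0:ℝ) < M ^ n / ξ ^ n + 1 := by positivity
        rw [Real.log_le_iff_le_exp h0]
        have := Real.add_one_le_exp (M ^ n / ξ ^ n)
        linarith
      calc κ / n * Real.log (M ^ n / ξ ^ n + 1) ≤ κ / n * (M ^ n / ξ ^ n) := by
            apply mul_le_mul_of_nonneg_left hlog (by positivity)
        _ = κ * (ξ ^ n)⁻¹ * (M ^ n / n) := by field_simp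
    · -- large case : split at ξ
      have hGξ : IntervalIntegrable G volume 0 ξ := by
        apply ContinuousOn.intervalIntegrable
        apply hGc.mono
        rw [Set.uIcc_of_le hξ.le]
        exact Set.Icc_subset_Icc le_rfl hξM.le
      have hGξM : IntervalIntegrable G volume ξ M := by
        apply ContinuousOn.intervalIntegrable
        apply hGc.mono
        rw [Set.uIcc_of_le hξM.le]
        exact Set.Icc_subset_Icc hξ.le le_rfl
      rw [← intervalIntegral.integral_add_adjacent_intervals hGξ hGξM]
      have hpart1 : κ / n ≤ ∫ y in (0:ℝ)..ξ, G y := by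
        have := hint1 ξ hξ hξM.le le_rfl
        refine le_trans (le_of_eq ?_) this
        field_simp
      have hpart2 : κ * Real.log (M / ξ) ≤ ∫ y in ξ..M, G y := by
        have hlowbd : ∀ y ∈ Set.Icc ξ M, κ * y⁻¹ ≤ G y := by
          intro y hy
          have hy0 : 0 < y := lt_of_lt_of_le hξ hy.1
          have hyp : ξ ^ p ≤ y ^ p := Real.rpow_le_rpow hξ.le hy.1 hppos.le
          have hb : y ^ p + ξ ^ p ≤ 2 * y ^ p := by linarith
          have h1 : (2 * y ^ p) ^ (1 - (n:ℝ)) ≤ (y ^ p + ξ ^ p) ^ (1 - (n:ℝ)) := by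
            apply Real.rpow_le_rpow_of_nonpos _ hb (by linarith)
            have := Real.rpow_pos_of_pos hy0 p
            have := Real.rpow_pos_of_pos hξ p
            linarith
          have h2' : (2 * y ^ p) ^ (1 - (n:ℝ)) = κ * (y ^ n)⁻¹ := by
            rw [Real.mul_rpow (by norm_num) (Real.rpow_nonneg hy0.le p), h2, hxp y hy0]
          have : κ * y⁻¹ = y ^ (n-1) * (κ * (y ^ n)⁻¹) := by
            rw [show n = (n-1) + 1 by omega]
            field_simp
            rw [Nat.add_sub_cancel, pow_succ']
          rw [this, ← h2']
          exact mul_le_mul_of_nonneg_left h1 (pow_nonneg hy0.le _)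
        have hintinv : IntervalIntegrable (fun y : ℝ => κ * y⁻¹) volume ξ M := by
          apply ContinuousOn.intervalIntegrable
          apply ContinuousOn.mul continuousOn_const
          apply ContinuousOn.inv₀ continuousOn_id
          intro x hx
          rw [Set.uIcc_of_le hξM.le] at hx
          exact ne_of_gt (lt_of_lt_of_le hξ hx.1)
        have hmono := intervalIntegral.integral_mono_on (μ := volume) hξM.le hintinv hGξM hlowbd
        refine le_trans (le_of_eq ?_) hmono
        rw [intervalIntegral.integral_const_mul, integral_inv]
        rw [Set.uIcc_of_le hξM.le]
        intro h
        exact absurd h.1 (not_le.mpr hξ)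
      have hlog2 : Real.log (M ^ n / ξ ^ n + 1) ≤ 1 + (n:ℝ) * Real.log (M / ξ) := by
        have ht1 : (1:ℝ) < M ^ n / ξ ^ n := by
          rw [lt_div_iff₀ (by positivity), one_mul]
          exact pow_lt_pow_left₀ hξM hξ.le (by omega)
        have hlogmul : Real.log (M ^ n / ξ ^ n) = (n:ℝ) * Real.log (M / ξ) := by
          rw [← div_pow, Real.log_pow]
        have hstep : Real.log (M ^ n / ξ ^ n + 1) ≤ Real.log (2 * (M ^ n / ξ ^ n)) := by
          apply Real.log_le_log (by positivity)
          linarith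
        rw [Real.log_mul (by norm_num) (by positivity), hlogmul] at hstep
        have hl2 : Real.log 2 ≤ 1 := by
          have := Real.log_le_sub_one_of_pos (show (0:ℝ) < 2 by norm_num)
          linarith
        linarith
      calc κ / n * Real.log (M ^ n / ξ ^ n + 1)
          ≤ κ / n * (1 + (n:ℝ) * Real.log (M / ξ)) := by
            apply mul_le_mul_of_nonneg_left hlog2 (by positivity)
        _ = κ / n + κ * Real.log (M / ξ) := by field_simp
        _ ≤ (∫ y in (0:ℝ)..ξ, G y) + ∫ y in ξ..M, G y := add_le_add hpart1 hpart2
  -- convert interval integral to set integral over Ioo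
  have hconv : (∫ y in (0:ℝ)..M, G y) = ∫ y in Set.Ioo (0:ℝ) M, G y := by
    rw [intervalIntegral.integral_of_le hM.le,
      setIntegral_congr_set (Ioo_ae_eq_Ioc (μ := volume) (a := (0:ℝ)) (b := M)).symm]
  rw [← hconv]
  exact key

theorem g_xi_log_lower_bound
    (n : ℕ) (hn : 2 ≤ n) :
    ∃ c : ℝ, 0 < c ∧ ∀ M ξ : ℝ, 0 < M → 0 < ξ →
      c * Real.log (M ^ n / ξ ^ n + 1) ≤
        ∫ z in Metric.ball (0 : EuclideanSpace ℝ (Fin n)) M,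
          (‖z‖ ^ ((n : ℝ) / (n - 1)) + ξ ^ ((n : ℝ) / (n - 1))) ^ (1 - (n : ℝ)) := by
  haveI : NeZero n := ⟨by omega⟩
  haveI : Nontrivial (EuclideanSpace ℝ (Fin n)) := by
    have : 0 < n := by omega
    infer_instance
  set V : ℝ := (volume (Metric.ball (0 : EuclideanSpace ℝ (Fin n)) 1)).toReal with hV
  have hVpos : 0 < V := by
    rw [hV]
    apply ENNReal.toReal_pos
    · exact (Metric.measure_ball_pos volume 0 one_pos).ne'
    · exact (measure_ball_lt_top).ne
  set κ : ℝ := ((2:ℝ)^(n-1))⁻¹ with hκ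
  have hκpos : 0 < κ := by positivity
  refine ⟨V * κ, by positivity, ?_⟩
  intro M ξ hM hξ
  set p : ℝ := (n : ℝ) / (n - 1) with hp
  set g : ℝ → ℝ := fun r => (r ^ p + ξ ^ p) ^ (1 - (n : ℝ)) with hg
  set f : ℝ → ℝ := Set.indicator (Set.Iio M) g with hf
  have hdim : Module.finrank ℝ (EuclideanSpace ℝ (Fin n)) = n := finrank_euclideanSpace_fin
  have key := integral_fun_norm_addHaar (volume : Measure (EuclideanSpace ℝ (Fin n))) f
  rw [hdim] at key
  have hlhs : (∫ x : EuclideanSpace ℝ (Fin n), f ‖x‖) =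
      ∫ z in Metric.ball (0 : EuclideanSpace ℝ (Fin n)) M,
        (‖z‖ ^ p + ξ ^ p) ^ (1 - (n : ℝ)) := by
    rw [← integral_indicator measurableSet_ball]
    congr 1
    funext x
    by_cases h : ‖x‖ < M <;>
      simp [hf, hg, Set.indicator_apply, mem_ball_zero_iff, h]
  have hrhs : (∫ y in Set.Ioi (0:ℝ), y ^ (n-1) • f y) =
      ∫ y in Set.Ioo (0:ℝ) M, y ^ (n-1) * g y := by
    have : ∀ y : ℝ, y ^ (n-1) • f y = Set.indicator (Set.Iio M) (fun y => y ^ (n-1) * g y) y := by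
      intro y
      simp only [hf, Set.indicator_apply, smul_eq_mul]
      split <;> simp
    simp_rw [this]
    rw [setIntegral_indicator measurableSet_Iio, Set.Ioi_inter_Iio]
  rw [hlhs, hrhs] at key
  rw [key]
  have h1d : κ / n * Real.log (M ^ n / ξ ^ n + 1) ≤
      ∫ y in Set.Ioo (0:ℝ) M, y ^ (n-1) * g y := one_dim_bound n hn M ξ hM hξ
  have hnpos : (0:ℝ) < n := by positivity
  rw [nsmul_eq_mul, smul_eq_mul]
  calc V * κ * Real.log (M ^ n / ξ ^ n + 1)
      = (n:ℝ) * (V * (κ / n * Real.log (M ^ n / ξ ^ n + 1))) := by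
        have : (n:ℝ) ≠ 0 := hnpos.ne'
        field_simp
    _ ≤ (n:ℝ) * (V * ∫ y in Set.Ioo (0:ℝ) M, y ^ (n-1) * g y) := by
        apply mul_le_mul_of_nonneg_left _ hnpos.le
        exact mul_le_mul_of_nonneg_left h1d hVpos.le
end

section
/- Let Q₀ = Q_R be a cube in ℝ^n, let A ⊂ B ⊂ Q₀ be measurable sets, and let δ ∈ (0,1). Assume: (a) |A| ≤ δ|Q₀|, and (b) for every dyadic subcube Q of Q₀ with |A ∩ Q| > δ|Q|, the predecessor (parent) cube of Q is contained in B. Then |A| ≤ δ|B|. -/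
open MeasureTheory

/-- The half-open dyadic subcube of generation `k` and index `i` of the cube with lower
corner `lo` and side length `s` in `ℝ^n`. -/
def dyadicSubcube (n : ℕ) (lo : Fin n → ℝ) (s : ℝ) (k : ℕ) (i : Fin n → ℕ) :
    Set (EuclideanSpace ℝ (Fin n)) :=
  {x | ∀ j : Fin n, lo j + (i j : ℝ) * (s / 2 ^ k) ≤ x j ∧
    x j < lo j + ((i j : ℝ) + 1) * (s / 2 ^ k)}

open Set


section Basics
variable (n : ℕ) (lo : Fin n → ℝ) (s : ℝ)

lemma dyadic_eq_preimage (k : ℕ) (i : Fin n → ℕ) :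
    dyadicSubcube n lo s k i = (MeasurableEquiv.toLp 2 (Fin n → ℝ)).symm ⁻¹'
      (Set.univ.pi fun j => Set.Ico (lo j + (i j : ℝ) * (s / 2 ^ k))
        (lo j + ((i j : ℝ) + 1) * (s / 2 ^ k))) := by
  ext x
  simp [dyadicSubcube, Set.mem_pi, MeasurableEquiv.toLp]
  rfl

lemma dyadic_measurable (k : ℕ) (i : Fin n → ℕ) :
    MeasurableSet (dyadicSubcube n lo s k i) := by
  rw [dyadic_eq_preimage]
  exact (MeasurableEquiv.toLp 2 (Fin n → ℝ)).symm.measurable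
    (MeasurableSet.univ_pi fun j => measurableSet_Ico)

lemma dyadic_volume (hs : 0 < s) (k : ℕ) (i : Fin n → ℕ) :
    volume (dyadicSubcube n lo s k i) = ENNReal.ofReal ((s / 2 ^ k) ^ n) := by
  rw [dyadic_eq_preimage,
    (EuclideanSpace.volume_preserving_symm_measurableEquiv_toLp (Fin n)).measure_preimage
      ((MeasurableSet.univ_pi fun j => measurableSet_Ico).nullMeasurableSet),
    volume_pi_pi]
  have h : (0:ℝ) ≤ s / 2 ^ k := by positivity
  simp only [Real.volume_Ico]
  have : ∀ j : Fin n, lo j + ((i j : ℝ) + 1) * (s / 2 ^ k) - (lo j + (i j : ℝ) * (s / 2 ^ k))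
      = s / 2 ^ k := by intro j; ring
  simp only [this, Finset.prod_const, Finset.card_univ, Fintype.card_fin]
  rw [← ENNReal.ofReal_pow h]
end Basics

noncomputable def dyadicIdx (n : ℕ) (lo : Fin n → ℝ) (s : ℝ) (k : ℕ)
    (x : EuclideanSpace ℝ (Fin n)) : Fin n → ℕ :=
  fun j => ⌊(x j - lo j) / (s / 2 ^ k)⌋₊

section Idx
variable {n : ℕ} {lo : Fin n → ℝ} {s : ℝ}

lemma ell_pos (hs : 0 < s) (k : ℕ) : (0:ℝ) < s / 2 ^ k := by positivity

lemma mem_Q0 {x : EuclideanSpace ℝ (Fin n)}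
    (hx : x ∈ dyadicSubcube n lo s 0 (fun _ => 0)) (j : Fin n) :
    lo j ≤ x j ∧ x j < lo j + s := by
  have h := hx j
  simpa using h

lemma mem_idx (hs : 0 < s) {x : EuclideanSpace ℝ (Fin n)}
    (hx : x ∈ dyadicSubcube n lo s 0 (fun _ => 0)) (k : ℕ) :
    x ∈ dyadicSubcube n lo s k (dyadicIdx n lo s k x) := by
  intro j
  have h0 := mem_Q0 hx j
  have hl : (0:ℝ) < s / 2 ^ k := ell_pos hs k
  have ht0 : (0:ℝ) ≤ (x j - lo j) / (s / 2 ^ k) := by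
    apply div_nonneg (by linarith [h0.1]) hl.le
  constructor
  · have := Nat.floor_le ht0
    rw [le_div_iff₀ hl] at this
    simp only [dyadicIdx]; linarith
  · have := Nat.lt_floor_add_one ((x j - lo j) / (s / 2 ^ k))
    rw [div_lt_iff₀ hl] at this
    simp only [dyadicIdx]; linarith

lemma idx_lt (hs : 0 < s) {x : EuclideanSpace ℝ (Fin n)}
    (hx : x ∈ dyadicSubcube n lo s 0 (fun _ => 0)) (k : ℕ) (j : Fin n) :
    dyadicIdx n lo s k x j < 2 ^ k := by
  have h0 := mem_Q0 hx j
  have hl : (0:ℝ) < s / 2 ^ k := ell_pos hs k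
  have : (x j - lo j) / (s / 2 ^ k) < 2 ^ k := by
    rw [div_lt_iff₀ hl]
    have : (2:ℝ) ^ k * (s / 2 ^ k) = s := by field_simp
    rw [this]; linarith [h0.2]
  have h2 := Nat.floor_lt' (by positivity : (2:ℕ)^k ≠ 0) |>.mpr (by push_cast; exact this)
  simpa [dyadicIdx] using h2

lemma idx_unique (hs : 0 < s) {x : EuclideanSpace ℝ (Fin n)} {k : ℕ} {i i' : Fin n → ℕ}
    (h : x ∈ dyadicSubcube n lo s k i) (h' : x ∈ dyadicSubcube n lo s k i') : i = i' := by
  funext j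
  have hl : (0:ℝ) < s / 2 ^ k := ell_pos hs k
  have h1 := h j; have h2 := h' j
  have a1 : (i j : ℝ) < (i' j : ℝ) + 1 := by
    have c1 : (i j : ℝ) * (s / 2 ^ k) < ((i' j : ℝ) + 1) * (s / 2 ^ k) := by linarith
    exact (mul_lt_mul_iff_left₀ hl).mp c1
  have a2 : (i' j : ℝ) < (i j : ℝ) + 1 := by
    have c1 : (i' j : ℝ) * (s / 2 ^ k) < ((i j : ℝ) + 1) * (s / 2 ^ k) := by linarith
    exact (mul_lt_mul_iff_left₀ hl).mp c1
  have : i j = i' j := by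
    have b1 : i j < i' j + 1 := by exact_mod_cast a1
    have b2 : i' j < i j + 1 := by exact_mod_cast a2
    omega
  exact this

lemma subset_parent (hs : 0 < s) (k d : ℕ) (i : Fin n → ℕ) :
    dyadicSubcube n lo s (k + d) i ⊆ dyadicSubcube n lo s k (fun j => i j / 2 ^ d) := by
  intro y hy j
  have hy' := hy j
  have hl : (0:ℝ) < s / 2 ^ (k + d) := ell_pos hs (k + d)
  have hle : (2:ℝ) ^ d * (s / 2 ^ (k + d)) = s / 2 ^ k := by
    rw [pow_add]; field_simp
  have d1 : (i j / 2 ^ d) * 2 ^ d ≤ i j := Nat.div_mul_le_self _ _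
  have d2 : i j + 1 ≤ (i j / 2 ^ d + 1) * 2 ^ d := by
    have h1 := Nat.lt_div_mul_add (a := i j) (by positivity : 0 < 2 ^ d)
    calc i j + 1 ≤ i j / 2 ^ d * 2 ^ d + 2 ^ d := h1
    _ = (i j / 2 ^ d + 1) * 2 ^ d := by ring
  constructor
  · have : ((i j / 2 ^ d : ℕ) : ℝ) * (s / 2 ^ k)
        = (((i j / 2 ^ d) * 2 ^ d : ℕ) : ℝ) * (s / 2 ^ (k + d)) := by
      push_cast; rw [← hle]; ring
    rw [this]
    have : (((i j / 2 ^ d) * 2 ^ d : ℕ) : ℝ) ≤ (i j : ℝ) := by exact_mod_cast d1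
    nlinarith [hy'.1, hl.le]
  · have e1 : (((i j / 2 ^ d : ℕ) : ℝ) + 1) * (s / 2 ^ k)
        = (((i j / 2 ^ d + 1) * 2 ^ d : ℕ) : ℝ) * (s / 2 ^ (k + d)) := by
      push_cast; rw [← hle]; ring
    rw [e1]
    have e2 : ((i j : ℝ) + 1) ≤ (((i j / 2 ^ d + 1) * 2 ^ d : ℕ) : ℝ) := by
      exact_mod_cast d2
    nlinarith [hy'.2, hl.le]

lemma nested (hs : 0 < s) {x : EuclideanSpace ℝ (Fin n)} {k k' : ℕ} (hkk : k ≤ k') {i i' : Fin n → ℕ}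
    (h : x ∈ dyadicSubcube n lo s k i) (h' : x ∈ dyadicSubcube n lo s k' i') :
    dyadicSubcube n lo s k' i' ⊆ dyadicSubcube n lo s k i := by
  obtain ⟨d, rfl⟩ := Nat.exists_eq_add_of_le hkk
  have hsub := subset_parent (lo := lo) hs k d i'
  have := idx_unique hs h (hsub h')
  rw [this]; exact hsub
end Idx
section Ball
variable {n : ℕ} {lo : Fin n → ℝ} {s : ℝ}

lemma cube_subset_closedBall (hn : 1 ≤ n) (hs : 0 < s) {k : ℕ} {i : Fin n → ℕ}
    {x : EuclideanSpace ℝ (Fin n)} (hx : x ∈ dyadicSubcube n lo s k i) :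
    dyadicSubcube n lo s k i ⊆ Metric.closedBall x (s / 2 ^ k * n) := by
  intro y hy
  have hl : (0:ℝ) < s / 2 ^ k := ell_pos hs k
  rw [Metric.mem_closedBall, EuclideanSpace.dist_eq]
  have hcoord : ∀ j : Fin n, dist (y j) (x j) ^ 2 ≤ (s / 2 ^ k) ^ 2 := by
    intro j
    have h1 := hx j; have h2 := hy j
    have : |y j - x j| ≤ s / 2 ^ k := by
      rw [abs_le]; constructor <;> nlinarith [h1.1, h1.2, h2.1, h2.2]
    rw [Real.dist_eq]
    exact pow_le_pow_left₀ (abs_nonneg _) this 2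
  have hsum : (∑ j : Fin n, dist (y j) (x j) ^ 2) ≤ (s / 2 ^ k * n) ^ 2 := by
    calc (∑ j : Fin n, dist (y j) (x j) ^ 2) ≤ ∑ _j : Fin n, (s / 2 ^ k) ^ 2 :=
          Finset.sum_le_sum fun j _ => hcoord j
    _ = n * (s / 2 ^ k) ^ 2 := by simp [Finset.sum_const, mul_comm]
    _ ≤ (s / 2 ^ k * n) ^ 2 := by
        have hn1 : (1:ℝ) ≤ (n:ℝ) := by exact_mod_cast hn
        nlinarith [mul_nonneg (mul_nonneg (by linarith : (0:ℝ) ≤ (n:ℝ))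
          (by linarith : (0:ℝ) ≤ (n:ℝ) - 1)) (sq_nonneg (s / 2 ^ k))]
  calc Real.sqrt (∑ j : Fin n, dist (y j) (x j) ^ 2) ≤ Real.sqrt ((s / 2 ^ k * n) ^ 2) :=
        Real.sqrt_le_sqrt hsum
  _ = s / 2 ^ k * n := Real.sqrt_sq (by positivity)
end Ball
section Density
variable {n : ℕ} {lo : Fin n → ℝ} {s : ℝ}

lemma exists_selected (hn : 1 ≤ n) (hs : 0 < s) (A : Set (EuclideanSpace ℝ (Fin n)))
    {δ : ℝ} (hδ0 : 0 < δ) (hδ1 : δ < 1) {x : EuclideanSpace ℝ (Fin n)}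
    (hx0 : x ∈ dyadicSubcube n lo s 0 (fun _ => 0))
    (hd : Filter.Tendsto (fun r => volume (A ∩ Metric.closedBall x r) /
        volume (Metric.closedBall x r)) (nhdsWithin 0 (Set.Ioi 0)) (nhds 1)) :
    ∃ k, 0 < k ∧ ENNReal.ofReal δ * volume (dyadicSubcube n lo s k (dyadicIdx n lo s k x)) <
      volume (A ∩ dyadicSubcube n lo s k (dyadicIdx n lo s k x)) := by
  classical
  set c : ENNReal := volume (Metric.ball (0:EuclideanSpace ℝ (Fin n)) 1) with hc
  have hfin : (Module.finrank ℝ (EuclideanSpace ℝ (Fin n))) = n := by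
    simp [finrank_euclideanSpace]
  have hcfin : c ≠ ⊤ := measure_ball_lt_top.ne
  set c' : ℝ := c.toReal with hc'
  have hcball : ∀ (z : EuclideanSpace ℝ (Fin n)) (r : ℝ), 0 ≤ r →
      volume (Metric.closedBall (z : EuclideanSpace ℝ (Fin n)) r) = ENNReal.ofReal (r ^ n * c') := by
    intro (z : EuclideanSpace ℝ (Fin n)) r hr
    rw [MeasureTheory.Measure.addHaar_closedBall volume z hr, hfin,
      ENNReal.ofReal_mul (by positivity)]
    congr 1
    rw [hc', ENNReal.ofReal_toReal hcfin]
  set K : ℝ := (n:ℝ) ^ n * c' with hK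
  -- K ≥ 1
  have hK1 : (1:ℝ) ≤ K := by
    have hx0' : x ∈ dyadicSubcube n lo s 0 (dyadicIdx n lo s 0 x) := mem_idx hs hx0 0
    have hsub := cube_subset_closedBall hn hs hx0'
    have hmono := measure_mono (μ := volume) hsub
    rw [dyadic_volume n lo s hs, hcball x _ (by positivity)] at hmono
    have h20 : (2:ℝ) ^ (0:ℕ) = 1 := pow_zero 2
    have hle : (s / 2 ^ (0:ℕ)) ^ n ≤ (s / 2 ^ (0:ℕ) * n) ^ n * c' :=
      (ENNReal.ofReal_le_ofReal_iff (by positivity)).mp hmono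
    have hsn : (0:ℝ) < s ^ n := by positivity
    have : (s / 2 ^ (0:ℕ) * (n:ℝ)) ^ n = s ^ n * (n:ℝ) ^ n := by
      rw [h20]; rw [div_one]; rw [mul_pow]
    rw [this, h20, div_one] at hle
    have h2 : s ^ n * 1 ≤ s ^ n * ((n:ℝ) ^ n * c') := by linarith [hle]
    have := (mul_le_mul_iff_right₀ hsn).mp h2
    simpa [hK] using this
  have hKpos : (0:ℝ) < K := by linarith
  set t : ℝ := 1 - (1 - δ) / (2 * K) with hT
  have htlt1 : t < 1 := by
    have : 0 < (1 - δ) / (2 * K) := div_pos (by linarith) (by linarith)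
    simp only [hT]; linarith
  have ht0 : 0 < t := by
    have h1 : (1 - δ) / (2 * K) ≤ (1 - δ) / 2 := by
      apply div_le_div_of_nonneg_left (by linarith) (by norm_num) (by linarith)
    simp only [hT]; linarith
  have hev : ∀ᶠ r in nhdsWithin (0:ℝ) (Set.Ioi 0), ENNReal.ofReal t <
      volume (A ∩ Metric.closedBall x r) / volume (Metric.closedBall x r) := by
    apply hd.eventually (eventually_gt_nhds ?_)
    exact ENNReal.ofReal_lt_one.mpr htlt1
  have hseq : Filter.Tendsto (fun k : ℕ => s / 2 ^ k * n) Filter.atTop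
      (nhdsWithin (0:ℝ) (Set.Ioi 0)) := by
    apply tendsto_nhdsWithin_of_tendsto_nhds_of_eventually_within
    · have h2 : Filter.Tendsto (fun k : ℕ => ((1:ℝ)/2) ^ k) Filter.atTop (nhds 0) :=
        tendsto_pow_atTop_nhds_zero_of_lt_one (by norm_num) (by norm_num)
      have h3 := h2.const_mul (s * (n:ℝ))
      rw [mul_zero] at h3
      convert h3 using 2 with k
      field_simp
      rw [← mul_pow]; norm_num
    · exact Filter.Eventually.of_forall fun k => Set.mem_Ioi.mpr (by positivity)
  obtain ⟨k, hk1, hk2⟩ := ((hseq.eventually hev).and (Filter.eventually_ge_atTop 1)).exists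
  refine ⟨k, hk2, ?_⟩
  set ℓ : ℝ := s / 2 ^ k with hℓ
  have hℓpos : 0 < ℓ := ell_pos hs k
  set Q := dyadicSubcube n lo s k (dyadicIdx n lo s k x) with hQ
  set r : ℝ := ℓ * n with hr
  have hrpos : 0 < r := by
    have : (1:ℝ) ≤ n := by exact_mod_cast hn
    positivity
  set Bl := Metric.closedBall x r with hBl
  have hvolQ : volume Q = ENNReal.ofReal (ℓ ^ n) := dyadic_volume n lo s hs k _
  have hvolBl : volume Bl = ENNReal.ofReal (ℓ ^ n * K) := by
    rw [hBl, hcball x r hrpos.le]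
    congr 1
    rw [hr, hK, mul_pow]
    ring
  have hQB : Q ⊆ Bl := cube_subset_closedBall hn hs (mem_idx hs hx0 k)
  have hstrict : ENNReal.ofReal t * volume Bl < volume (A ∩ Bl) :=
    ENNReal.mul_lt_of_lt_div hk1
  have hsplit : volume (A ∩ Bl) ≤ volume (A ∩ Q) + volume (Bl \ Q) := by
    refine le_trans (measure_mono ?_) (measure_union_le _ _)
    intro y hy
    by_cases hyQ : y ∈ Q
    · exact Or.inl ⟨hy.1, hyQ⟩
    · exact Or.inr ⟨hy.2, hyQ⟩
  have hdiff : volume (Bl \ Q) = ENNReal.ofReal (ℓ ^ n * K - ℓ ^ n) := by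
    rw [measure_diff hQB (dyadic_measurable n lo s k _).nullMeasurableSet
      (by rw [hvolQ]; exact ENNReal.ofReal_ne_top), hvolQ, hvolBl,
      ← ENNReal.ofReal_sub _ (by positivity)]
  have hreal : δ * ℓ ^ n + (ℓ ^ n * K - ℓ ^ n) ≤ t * (ℓ ^ n * K) := by
    have hln : (0:ℝ) < ℓ ^ n := by positivity
    have htK : t * K = K - (1 - δ) / 2 := by
      rw [hT]
      field_simp
    have : t * (ℓ ^ n * K) = ℓ ^ n * (t * K) := by ring
    rw [this, htK]
    nlinarith [hln]
  have hchain : ENNReal.ofReal δ * volume Q + volume (Bl \ Q) <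
      volume (A ∩ Q) + volume (Bl \ Q) := by
    calc ENNReal.ofReal δ * volume Q + volume (Bl \ Q)
        = ENNReal.ofReal (δ * ℓ ^ n + (ℓ ^ n * K - ℓ ^ n)) := by
          rw [hvolQ, hdiff, ← ENNReal.ofReal_mul hδ0.le, ← ENNReal.ofReal_add (by positivity)]
          have hln : (0:ℝ) < ℓ ^ n := by positivity
          have : ℓ ^ n ≤ ℓ ^ n * K := by nlinarith
          linarith [this]
      _ ≤ ENNReal.ofReal (t * (ℓ ^ n * K)) := ENNReal.ofReal_le_ofReal hreal
      _ = ENNReal.ofReal t * volume Bl := by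
          rw [hvolBl, ENNReal.ofReal_mul ht0.le]
      _ < volume (A ∩ Bl) := hstrict
      _ ≤ volume (A ∩ Q) + volume (Bl \ Q) := hsplit
  exact lt_of_add_lt_add_right hchain
end Density

set_option maxHeartbeats 2000000 in
/-- Calderón–Zygmund growing ink-spots lemma (Lemma 7.5, Caffarelli–Cabré):
if `A ⊆ B ⊆ Q₀`, `|A| ≤ δ|Q₀|`, and whenever a dyadic subcube `Q` satisfies
`|A ∩ Q| > δ|Q|` its predecessor is contained in `B`, then `|A| ≤ δ|B|`. -/
theorem calderon_zygmund_ink_spots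
    (n : ℕ) (hn : 1 ≤ n) (lo : Fin n → ℝ) (s : ℝ) (hs : 0 < s)
    (A B : Set (EuclideanSpace ℝ (Fin n)))
    (hAmeas : MeasurableSet A) (hBmeas : MeasurableSet B)
    (hAB : A ⊆ B) (hBQ : B ⊆ dyadicSubcube n lo s 0 (fun _ => 0))
    (δ : ℝ) (hδ0 : 0 < δ) (hδ1 : δ < 1)
    (hA : volume A ≤ ENNReal.ofReal δ * volume (dyadicSubcube n lo s 0 (fun _ => 0)))
    (hpred : ∀ (k : ℕ) (i : Fin n → ℕ), (∀ j, i j < 2 ^ (k + 1)) →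
      ENNReal.ofReal δ * volume (dyadicSubcube n lo s (k + 1) i) <
        volume (A ∩ dyadicSubcube n lo s (k + 1) i) →
      dyadicSubcube n lo s k (fun j => i j / 2) ⊆ B) :
    volume A ≤ ENNReal.ofReal δ * volume B := by
  classical
  have hA0 : A ⊆ dyadicSubcube n lo s 0 (fun _ => 0) := fun x hx => hBQ (hAB hx)
  set ix : ℕ → EuclideanSpace ℝ (Fin n) → Fin n → ℕ := fun k x => dyadicIdx n lo s k x with hix
  set sel : ℕ → (Fin n → ℕ) → Prop := fun k i =>
    ENNReal.ofReal δ * volume (dyadicSubcube n lo s k i) <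
      volume (A ∩ dyadicSubcube n lo s k i) with hsel
  -- density points
  set D : Set (EuclideanSpace ℝ (Fin n)) := {x | Filter.Tendsto
    (fun r => volume (A ∩ Metric.closedBall x r) / volume (Metric.closedBall x r))
    (nhdsWithin 0 (Set.Ioi 0)) (nhds 1)} with hD
  have hBes := Besicovitch.ae_tendsto_measure_inter_div volume A
  have hN : volume (Dᶜ ∩ A) = 0 := by
    have := (MeasureTheory.ae_iff).mp hBes
    rwa [MeasureTheory.Measure.restrict_apply' hAmeas] at this
  set G : Set (EuclideanSpace ℝ (Fin n)) := A ∩ D with hG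
  -- the parent property
  set pOK : ℕ → (Fin n → ℕ) → Prop := fun m i =>
    ¬ sel m i ∧ dyadicSubcube n lo s m i ⊆ B with hpOK
  -- every good point has a parent-OK ancestor
  have hC1 : ∀ x ∈ G, ∃ m, pOK m (ix m x) := by
    rintro x ⟨hxA, hxD⟩
    have hx0 : x ∈ dyadicSubcube n lo s 0 (fun _ => 0) := hA0 hxA
    have hex : ∃ k, 0 < k ∧ sel k (ix k x) :=
      exists_selected hn hs A hδ0 hδ1 hx0 hxD
    obtain ⟨hk0pos, hk0sel⟩ := Nat.find_spec hex
    obtain ⟨m, hm⟩ : ∃ m, Nat.find hex = m + 1 := ⟨Nat.find hex - 1, by omega⟩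
    rw [hm] at hk0sel
    refine ⟨m, ?_, ?_⟩
    · -- parent not selected
      rcases Nat.eq_zero_or_pos m with hm0 | hmpos
      · subst hm0
        have hidx0 : ix 0 x = fun _ => 0 := idx_unique hs (mem_idx hs hx0 0) hx0
        rw [hidx0]
        simp only [hsel]
        rw [Set.inter_eq_self_of_subset_left hA0]
        exact not_lt.mpr hA
      · have := Nat.find_min hex (m := m) (by omega)
        push_neg at this
        exact fun hselm => absurd (this hmpos) (by exact fun h => h hselm)
    · -- parent contained in B
      have hval : ∀ j, ix (m + 1) x j < 2 ^ (m + 1) := fun j => idx_lt hs hx0 (m + 1) j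
      have hB' := hpred m (ix (m + 1) x) hval hk0sel
      have hpar : x ∈ dyadicSubcube n lo s m (fun j => ix (m + 1) x j / 2) := by
        have := subset_parent hs m 1 (ix (m + 1) x) (mem_idx hs hx0 (m + 1))
        simpa [pow_one] using this
      have : ix m x = fun j => ix (m + 1) x j / 2 :=
        idx_unique hs (mem_idx hs hx0 m) hpar
      rw [this]
      exact hB'
  -- minimal admissible generation, twice minimized
  set g : EuclideanSpace ℝ (Fin n) → ℕ := fun x => sInf {m | pOK m (ix m x)} with hg
  set f : EuclideanSpace ℝ (Fin n) → ℕ :=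
    fun x => sInf {m | ∃ y ∈ G, g y = m ∧ ix m y = ix m x} with hf
  have hgOK : ∀ x ∈ G, pOK (g x) (ix (g x) x) := fun x hx => Nat.sInf_mem (hC1 x hx)
  have hfne : ∀ x ∈ G, ({m | ∃ y ∈ G, g y = m ∧ ix m y = ix m x} : Set ℕ).Nonempty :=
    fun x hx => ⟨g x, x, hx, rfl, rfl⟩
  have hfOK : ∀ x ∈ G, pOK (f x) (ix (f x) x) := by
    intro x hx
    obtain ⟨y, hyG, hgy, hixy⟩ := Nat.sInf_mem (hfne x hx)
    have h2 := hgOK y hyG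
    rw [hgy] at h2
    rwa [hixy] at h2
  have hmemf : ∀ x ∈ G, x ∈ dyadicSubcube n lo s (f x) (ix (f x) x) :=
    fun x hx => mem_idx hs (hA0 hx.1) (f x)
  -- key disjointness lemma
  have key : ∀ x ∈ G, ∀ x' ∈ G, f x ≤ f x' →
      (dyadicSubcube n lo s (f x) (ix (f x) x) ∩
        dyadicSubcube n lo s (f x') (ix (f x') x')).Nonempty →
      f x = f x' ∧ ix (f x) x = ix (f x') x' := by
    intro x hx x' hx' hle hnon
    obtain ⟨z, hz1, hz2⟩ := hnon
    have hsub := nested hs hle hz1 hz2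
    have hx'mem : x' ∈ dyadicSubcube n lo s (f x) (ix (f x) x) := hsub (hmemf x' hx')
    have hixeq : ix (f x) x' = ix (f x) x :=
      idx_unique hs (mem_idx hs (hA0 hx'.1) (f x)) hx'mem
    obtain ⟨y, hyG, hgy, hixy⟩ := Nat.sInf_mem (hfne x hx)
    have hmem2 : (f x) ∈ {m | ∃ y ∈ G, g y = m ∧ ix m y = ix m x'} :=
      ⟨y, hyG, hgy, by rw [hixy, hixeq]⟩
    have hle2 : f x' ≤ f x := Nat.sInf_le hmem2
    have heq : f x = f x' := le_antisymm hle hle2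
    refine ⟨heq, ?_⟩
    rw [← heq]
    exact hixeq.symm
  -- the disjoint family of cubes
  set S : Set (ℕ × (Fin n → ℕ)) := {p | ∃ x ∈ G, p.1 = f x ∧ p.2 = ix (f x) x} with hS
  set Qc : ℕ × (Fin n → ℕ) → Set (EuclideanSpace ℝ (Fin n)) :=
    fun p => dyadicSubcube n lo s p.1 p.2 with hQc
  have hScount : S.Countable := Set.to_countable S
  have hQmeas : ∀ p, MeasurableSet (Qc p) := fun p => dyadic_measurable n lo s p.1 p.2
  have hdisj : S.PairwiseDisjoint Qc := by
    rintro ⟨p1, p2⟩ ⟨x, hx, hp1, hp2⟩ ⟨q1, q2⟩ ⟨x', hx', hq1, hq2⟩ hpq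
    dsimp only at hp1 hp2 hq1 hq2
    subst hp1; subst hp2; subst hq1; subst hq2
    by_contra hcon
    rw [Set.not_disjoint_iff_nonempty_inter] at hcon
    rcases le_total (f x) (f x') with hle | hle
    · obtain ⟨h1, h2⟩ := key x hx x' hx' hle (by exact hcon)
      exact hpq (by rw [Prod.mk.injEq]; exact ⟨h1, h2⟩)
    · obtain ⟨h1, h2⟩ := key x' hx' x hx hle
        (by rw [Set.inter_comm] at hcon; exact hcon)
      exact hpq (by rw [Prod.mk.injEq]; exact ⟨h1.symm, h2.symm⟩)
  have hGU : G ⊆ ⋃ p ∈ S, Qc p := by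
    intro x hx
    exact Set.mem_biUnion
      (show ((f x, ix (f x) x) : ℕ × (Fin n → ℕ)) ∈ S from ⟨x, hx, rfl, rfl⟩)
      (hmemf x hx)
  have hUB : (⋃ p ∈ S, Qc p) ⊆ B := by
    intro z hz
    rw [Set.mem_iUnion₂] at hz
    obtain ⟨⟨p1, p2⟩, ⟨x, hx, hp1, hp2⟩, hzp⟩ := hz
    dsimp only at hp1 hp2
    subst hp1; subst hp2
    exact (hfOK x hx).2 hzp
  have step1 : volume A ≤ volume (A ∩ ⋃ p ∈ S, Qc p) := by
    have hsubA : A ⊆ (A ∩ ⋃ p ∈ S, Qc p) ∪ (Dᶜ ∩ A) := by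
      intro x hx
      by_cases hxD : x ∈ D
      · exact Or.inl ⟨hx, hGU ⟨hx, hxD⟩⟩
      · exact Or.inr ⟨hxD, hx⟩
    calc volume A ≤ volume ((A ∩ ⋃ p ∈ S, Qc p) ∪ (Dᶜ ∩ A)) := measure_mono hsubA
    _ ≤ volume (A ∩ ⋃ p ∈ S, Qc p) + volume (Dᶜ ∩ A) := measure_union_le _ _
    _ = volume (A ∩ ⋃ p ∈ S, Qc p) := by rw [hN, add_zero]
  have step2 : volume (A ∩ ⋃ p ∈ S, Qc p) = ∑' p : S, volume (A ∩ Qc p) := by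
    rw [Set.inter_iUnion₂]
    exact measure_biUnion hScount
      (fun p hp q hq hpq => ((hdisj hp hq hpq).mono Set.inter_subset_right
        Set.inter_subset_right))
      (fun p _ => hAmeas.inter (hQmeas p))
  have step3 : (∑' p : S, volume (A ∩ Qc p)) ≤ ∑' p : S, ENNReal.ofReal δ * volume (Qc p) := by
    apply ENNReal.tsum_le_tsum
    rintro ⟨⟨p1, p2⟩, ⟨x, hx, hp1, hp2⟩⟩
    dsimp only at hp1 hp2 ⊢
    subst hp1; subst hp2
    have hns := (hfOK x hx).1
    simp only [hpOK, hsel] at hns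
    exact not_lt.mp hns
  have step4 : (∑' p : S, ENNReal.ofReal δ * volume (Qc p))
      = ENNReal.ofReal δ * volume (⋃ p ∈ S, Qc p) := by
    rw [ENNReal.tsum_mul_left, measure_biUnion hScount hdisj (fun p _ => hQmeas p)]
  calc volume A ≤ volume (A ∩ ⋃ p ∈ S, Qc p) := step1
  _ = ∑' p : S, volume (A ∩ Qc p) := step2
  _ ≤ ∑' p : S, ENNReal.ofReal δ * volume (Qc p) := step3
  _ = ENNReal.ofReal δ * volume (⋃ p ∈ S, Qc p) := step4
  _ ≤ ENNReal.ofReal δ * volume B := mul_le_mul_right (measure_mono hUB) _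
end
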